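/- Let P be a Markov kernel on X with stationary distribution μ, γ ∈ [0,1), K ≥ 1, and w a probability vector in ℝ^K. For f ∈ L²(μ) define Δσ(f) := ∑_{ℓ=0}^{K−1} ( ∑_{k=ℓ+1}^{K} w_k γ^k ) · sqrt( E_{X∼μ}[ Var( (P^ℓ f)(X') | X ) ] ). Then Δσ(f) ≤ sqrt( γ(1−γ̄)/(1−γ) ) · ‖f‖_μ, where γ̄ = ∑_k w_k γ^k. -/

import Mathlib

open MeasureTheory ProbabilityTheory Finset

open scoped ENNReal NNReal

/-- Bochner-integral version of `Measure.lintegral_bind` for real-valued functions. -/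
lemma my_integral_bind {α β : Type*} [MeasurableSpace α] [MeasurableSpace β]
    (m : Measure α) (κ : Kernel α β) [IsSFiniteKernel κ] {f : β → ℝ} (hfm : Measurable f)
    (hfi : Integrable f (m.bind fun a => κ a)) :
    ∫ b, f b ∂(m.bind fun a => κ a) = ∫ a, ∫ b, f b ∂(κ a) ∂m := by
  have hκ : Measurable fun a => (κ a : Measure β) := κ.measurable
  have hp : Measurable fun b => ENNReal.ofReal (f b) := hfm.ennreal_ofReal
  have hn : Measurable fun b => ENNReal.ofReal (-f b) := hfm.neg.ennreal_ofReal
  have hnorm : ∀ b, ‖f b‖ₑ = ENNReal.ofReal (f b) + ENNReal.ofReal (-f b) := by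
    intro b
    rcases le_total 0 (f b) with h | h
    · rw [Real.enorm_eq_ofReal h, ENNReal.ofReal_of_nonpos (neg_nonpos.mpr h), add_zero]
    · rw [← enorm_neg, Real.enorm_eq_ofReal (neg_nonneg.mpr h), ENNReal.ofReal_of_nonpos h,
        zero_add]
  have hfin : ∫⁻ b, ‖f b‖ₑ ∂(m.bind fun a => κ a) ≠ ∞ := hfi.2.ne
  have hlep : ∀ (ν : Measure β), ∫⁻ b, ENNReal.ofReal (f b) ∂ν ≤ ∫⁻ b, ‖f b‖ₑ ∂ν := fun ν =>
    lintegral_mono fun b => by rw [hnorm b]; exact le_self_add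
  have hlen : ∀ (ν : Measure β), ∫⁻ b, ENNReal.ofReal (-f b) ∂ν ≤ ∫⁻ b, ‖f b‖ₑ ∂ν := fun ν =>
    lintegral_mono fun b => by rw [hnorm b]; exact le_add_self
  have hbp : ∫⁻ b, ENNReal.ofReal (f b) ∂(m.bind fun a => κ a)
      = ∫⁻ a, ∫⁻ b, ENNReal.ofReal (f b) ∂κ a ∂m := Measure.lintegral_bind hκ.aemeasurable hp.aemeasurable
  have hbn : ∫⁻ b, ENNReal.ofReal (-f b) ∂(m.bind fun a => κ a)
      = ∫⁻ a, ∫⁻ b, ENNReal.ofReal (-f b) ∂κ a ∂m := Measure.lintegral_bind hκ.aemeasurable hn.aemeasurable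
  have hfinp : ∫⁻ a, ∫⁻ b, ENNReal.ofReal (f b) ∂κ a ∂m ≠ ∞ := by
    rw [← hbp]; exact (lt_of_le_of_lt (hlep _) hfi.2).ne
  have hfinn : ∫⁻ a, ∫⁻ b, ENNReal.ofReal (-f b) ∂κ a ∂m ≠ ∞ := by
    rw [← hbn]; exact (lt_of_le_of_lt (hlen _) hfi.2).ne
  have hmp : Measurable fun a => ∫⁻ b, ENNReal.ofReal (f b) ∂κ a := Measurable.lintegral_kernel hp
  have hmn : Measurable fun a => ∫⁻ b, ENNReal.ofReal (-f b) ∂κ a := Measurable.lintegral_kernel hn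
  have haep : ∀ᵐ a ∂m, ∫⁻ b, ENNReal.ofReal (f b) ∂κ a < ∞ := ae_lt_top hmp hfinp
  have haen : ∀ᵐ a ∂m, ∫⁻ b, ENNReal.ofReal (-f b) ∂κ a < ∞ := ae_lt_top hmn hfinn
  have hae : ∀ᵐ a ∂m, ∫ b, f b ∂κ a =
      (∫⁻ b, ENNReal.ofReal (f b) ∂κ a).toReal - (∫⁻ b, ENNReal.ofReal (-f b) ∂κ a).toReal := by
    filter_upwards [haep, haen] with a hap han
    have hint : Integrable f (κ a) := by
      refine ⟨hfm.aestronglyMeasurable, ?_⟩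
      have heq : ∫⁻ b, ‖f b‖ₑ ∂κ a
          = (∫⁻ b, ENNReal.ofReal (f b) ∂κ a) + ∫⁻ b, ENNReal.ofReal (-f b) ∂κ a := by
        rw [← lintegral_add_left hp]
        exact lintegral_congr fun b => (hnorm b)
      rw [HasFiniteIntegral, heq]
      exact ENNReal.add_lt_top.2 ⟨hap, han⟩
    exact integral_eq_lintegral_pos_part_sub_lintegral_neg_part hint
  rw [integral_eq_lintegral_pos_part_sub_lintegral_neg_part hfi, integral_congr_ae hae]
  have hip : Integrable (fun a => (∫⁻ b, ENNReal.ofReal (f b) ∂κ a).toReal) m :=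
    integrable_toReal_of_lintegral_ne_top hmp.aemeasurable hfinp
  have hin : Integrable (fun a => (∫⁻ b, ENNReal.ofReal (-f b) ∂κ a).toReal) m :=
    integrable_toReal_of_lintegral_ne_top hmn.aemeasurable hfinn
  rw [integral_sub hip hin, integral_toReal hmp.aemeasurable haep,
    integral_toReal hmn.aemeasurable haen, hbp, hbn]

/-- `k`-step iterate of a Markov kernel. -/
noncomputable def kpow {X : Type*} [MeasurableSpace X] (P : Kernel X X) : ℕ → Kernel X X
  | 0 => Kernel.id
  | n + 1 => (kpow P n).comp P

instance kpow_markov {X : Type*} [MeasurableSpace X] (P : Kernel X X) [IsMarkovKernel P] (n : ℕ) :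
    IsMarkovKernel (kpow P n) := by
  induction n with
  | zero => rw [kpow]; infer_instance
  | succ n ih => rw [kpow]; infer_instance

lemma kpow_succ_apply {X : Type*} [MeasurableSpace X] (P : Kernel X X) (n : ℕ) (x : X) :
    kpow P (n + 1) x = (P x).bind fun a => kpow P n a := by
  show ((kpow P n).comp P) x = _
  rw [Kernel.comp_apply]

lemma kpow_stat {X : Type*} [MeasurableSpace X] (μ : Measure X) (P : Kernel X X)
    [IsMarkovKernel P] (hstat : μ.bind (fun x => P x) = μ) (n : ℕ) :
    μ.bind (fun x => kpow P n x) = μ := by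
  induction n with
  | zero =>
    have h : (fun x => kpow P 0 x) = fun x => Measure.dirac x := by
      funext x; show Kernel.id x = _; rw [Kernel.id_apply]
    rw [h, Measure.bind_dirac]
  | succ n ih =>
    have h : (fun x => kpow P (n+1) x) = fun x => (P x).bind fun a => kpow P n a := by
      funext x; exact kpow_succ_apply P n x
    rw [h, ← Measure.bind_bind P.measurable.aemeasurable (kpow P n).measurable.aemeasurable, hstat, ih]

/-- One-step facts for an `L²(μ)` function under a stationary Markov kernel. -/
lemma step {X : Type*} [MeasurableSpace X] (μ : Measure X) [IsProbabilityMeasure μ]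
    (P : Kernel X X) [IsMarkovKernel P] (hstat : μ.bind (fun x => P x) = μ)
    {h : X → ℝ} (hm : Measurable h) (h2 : MemLp h 2 μ) :
    (∀ᵐ x ∂μ, MemLp h 2 (P x)) ∧
    Integrable (fun x => ∫ y, h y ^ 2 ∂ P x) μ ∧
    (∫ x, (∫ y, h y ^ 2 ∂ P x) ∂μ = ∫ y, h y ^ 2 ∂μ) ∧
    MemLp (fun x => ∫ y, h y ∂ P x) 2 μ := by
  have hsq : Integrable (fun y => h y ^ 2) μ :=
    (memLp_two_iff_integrable_sq hm.aestronglyMeasurable).1 h2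
  have hsqm : Measurable fun y => h y ^ 2 := hm.pow_const 2
  have hlstat : ∀ {e : X → ℝ≥0∞}, Measurable e →
      ∫⁻ x, ∫⁻ y, e y ∂(P x) ∂μ = ∫⁻ y, e y ∂μ := by
    intro e he
    conv_rhs => rw [← hstat]
    rw [Measure.lintegral_bind P.measurable.aemeasurable he.aemeasurable]
  have heq : ∀ y, ‖h y ^ 2‖ₑ = ENNReal.ofReal (h y ^ 2) := fun y =>
    Real.enorm_eq_ofReal (sq_nonneg _)
  have hofm : Measurable fun y => ENNReal.ofReal (h y ^ 2) := hsqm.ennreal_ofReal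
  have hfin : ∫⁻ y, ENNReal.ofReal (h y ^ 2) ∂μ < ∞ := by
    have h' := hsq.2
    rw [HasFiniteIntegral] at h'
    refine lt_of_le_of_lt (le_of_eq ?_) h'
    exact lintegral_congr fun y => (heq y).symm
  have hiterfin : ∫⁻ x, ∫⁻ y, ENNReal.ofReal (h y ^ 2) ∂P x ∂μ < ∞ := by
    rw [hlstat hofm]; exact hfin
  have h1 : ∀ᵐ x ∂μ, MemLp h 2 (P x) := by
    filter_upwards [ae_lt_top (Measurable.lintegral_kernel hofm) hiterfin.ne] with x hx
    refine (memLp_two_iff_integrable_sq hm.aestronglyMeasurable).2 ⟨hsqm.aestronglyMeasurable, ?_⟩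
    rw [HasFiniteIntegral]
    refine lt_of_le_of_lt (le_of_eq (lintegral_congr fun y => heq y)) hx
  have haeeq : ∀ᵐ x ∂μ, ‖∫ y, h y ^ 2 ∂P x‖ₑ = ∫⁻ y, ENNReal.ofReal (h y ^ 2) ∂P x := by
    filter_upwards [h1] with x hx
    have hint : Integrable (fun y => h y ^ 2) (P x) :=
      (memLp_two_iff_integrable_sq hm.aestronglyMeasurable).1 hx
    rw [Real.enorm_eq_ofReal (integral_nonneg fun y => sq_nonneg _),
      ofReal_integral_eq_lintegral_ofReal hint (Filter.Eventually.of_forall fun y => sq_nonneg _)]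
  have hQm : Measurable fun x => ∫ y, h y ^ 2 ∂P x := by
    have hh : StronglyMeasurable (Function.uncurry fun (_ : X) y => h y ^ 2) :=
      hsqm.stronglyMeasurable.comp_measurable measurable_snd
    exact hh.integral_kernel_prod_right.measurable
  have h2int : Integrable (fun x => ∫ y, h y ^ 2 ∂P x) μ := by
    refine ⟨hQm.aestronglyMeasurable, ?_⟩
    rw [HasFiniteIntegral, lintegral_congr_ae haeeq, hlstat hofm]
    exact hfin
  have h3 : ∫ x, (∫ y, h y ^ 2 ∂P x) ∂μ = ∫ y, h y ^ 2 ∂μ := by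
    have hb : Integrable (fun y => h y ^ 2) (μ.bind fun a => P a) := by rw [hstat]; exact hsq
    have h' := my_integral_bind μ P hsqm hb
    rw [hstat] at h'
    exact h'.symm
  have hQhm : Measurable fun x => ∫ y, h y ∂P x := by
    have hh : StronglyMeasurable (Function.uncurry fun (_ : X) y => h y) :=
      hm.stronglyMeasurable.comp_measurable measurable_snd
    exact hh.integral_kernel_prod_right.measurable
  have hjensen : ∀ᵐ x ∂μ, (∫ y, h y ∂P x) ^ 2 ≤ ∫ y, h y ^ 2 ∂P x := by
    filter_upwards [h1] with x hx
    have hv := variance_nonneg h (P x)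
    rw [variance_eq_sub hx] at hv
    simp only [Pi.pow_apply] at hv
    linarith
  have h4 : MemLp (fun x => ∫ y, h y ∂P x) 2 μ := by
    refine (memLp_two_iff_integrable_sq hQhm.aestronglyMeasurable).2
      ⟨(hQhm.pow_const 2).aestronglyMeasurable, ?_⟩
    rw [HasFiniteIntegral]
    calc ∫⁻ x, ‖(∫ y, h y ∂P x) ^ 2‖ₑ ∂μ ≤ ∫⁻ x, ‖∫ y, h y ^ 2 ∂P x‖ₑ ∂μ := by
          refine lintegral_mono_ae ?_
          filter_upwards [hjensen] with x hx
          rw [Real.enorm_eq_ofReal (sq_nonneg _),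
            Real.enorm_eq_ofReal (integral_nonneg fun y => sq_nonneg _)]
          exact ENNReal.ofReal_le_ofReal hx
      _ < ∞ := h2int.2
  exact ⟨h1, h2int, h3, h4⟩

/-- Action of the `n`-step kernel on a function: `(Pⁿ f)(x) = ∫ f dPⁿ(·|x)`. -/
noncomputable def kact {X : Type*} [MeasurableSpace X] (P : Kernel X X) (n : ℕ)
    (f : X → ℝ) : X → ℝ :=
  fun x => ∫ y, f y ∂(kpow P n x)

/-- for a Markov kernel `P` with stationary distribution `μ`, `γ ∈ [0,1)`
and a probability weight vector `w`, the quantity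
`Δσ(f) = ∑_{ℓ=0}^{K-1} (∑_{k=ℓ+1}^K wₖ γᵏ) √(E_μ[Var((Pˡf)(X')|X)])`
is at most `√(γ(1-γ̄)/(1-γ)) ‖f‖_μ`. -/
theorem stmt6 {X : Type*} [MeasurableSpace X] (μ : Measure X) [IsProbabilityMeasure μ]
    (P : Kernel X X) [IsMarkovKernel P] (hstat : μ.bind (fun x => P x) = μ)
    (γ : ℝ) (hγ0 : 0 ≤ γ) (hγ1 : γ < 1) (K : ℕ) (hK : 1 ≤ K)
    (w : ℕ → ℝ) (hw0 : ∀ k ∈ Icc 1 K, 0 ≤ w k) (hw1 : ∑ k ∈ Icc 1 K, w k = 1)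
    (f : X → ℝ) (hf : Measurable f) (hf2 : MemLp f 2 μ) :
    ∑ ℓ ∈ range K, (∑ k ∈ Icc (ℓ + 1) K, w k * γ ^ k) *
        Real.sqrt (∫ x,
          ((∫ y, (kact P ℓ f y) ^ 2 ∂(P x)) - (∫ y, kact P ℓ f y ∂(P x)) ^ 2) ∂μ)
      ≤ Real.sqrt (γ * (1 - ∑ k ∈ Icc 1 K, w k * γ ^ k) / (1 - γ)) *
          Real.sqrt (∫ x, (f x) ^ 2 ∂μ) := by
  have honeγ : (0:ℝ) < 1 - γ := by linarith
  set γbar : ℝ := ∑ k ∈ Icc 1 K, w k * γ ^ k with hγbar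
  set g : ℕ → X → ℝ := fun ℓ => kact P ℓ f with hgdefn
  set a : ℕ → ℝ := fun ℓ => ∑ k ∈ Icc (ℓ + 1) K, w k * γ ^ k with ha
  -- measurability of the iterates
  have hgm : ∀ ℓ, Measurable (g ℓ) := by
    intro ℓ
    have hh : StronglyMeasurable (Function.uncurry fun (_ : X) y => f y) :=
      hf.stronglyMeasurable.comp_measurable measurable_snd
    exact (hh.integral_kernel_prod_right (κ := kpow P ℓ)).measurable
  have hg0 : g 0 = f := by
    funext x
    show ∫ y, f y ∂(kpow P 0 x) = f x
    rw [show kpow P 0 = Kernel.id from rfl, Kernel.id_apply,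
      integral_dirac' f x hf.stronglyMeasurable]
  have lstatn : ∀ (n : ℕ) {e : X → ℝ≥0∞}, Measurable e →
      ∫⁻ x, ∫⁻ y, e y ∂(kpow P n x) ∂μ = ∫⁻ y, e y ∂μ := by
    intro n e he
    conv_rhs => rw [← kpow_stat μ P hstat n]
    rw [Measure.lintegral_bind (kpow P n).measurable.aemeasurable he.aemeasurable]
  have hfint : ∀ n, ∀ᵐ x ∂μ, Integrable f (kpow P n x) := by
    intro n
    have hfi1 : Integrable f μ := hf2.integrable one_le_two
    have hfin : ∫⁻ x, ∫⁻ y, ‖f y‖ₑ ∂(kpow P n x) ∂μ < ∞ := by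
      rw [lstatn n hf.enorm]
      exact hfi1.2
    filter_upwards [ae_lt_top (Measurable.lintegral_kernel hf.enorm) hfin.ne] with x hx
    exact ⟨hf.aestronglyMeasurable, hx⟩
  have haeq : ∀ ℓ, g (ℓ + 1) =ᵐ[μ] fun x => ∫ y, g ℓ y ∂P x := by
    intro ℓ
    filter_upwards [hfint (ℓ + 1)] with x hx
    have hkx : kpow P (ℓ + 1) x = (P x).bind fun y => kpow P ℓ y := kpow_succ_apply P ℓ x
    show (∫ y, f y ∂(kpow P (ℓ + 1) x)) = ∫ y, g ℓ y ∂P x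
    rw [hkx] at hx ⊢
    exact my_integral_bind (P x) (kpow P ℓ) hf hx
  have hmem : ∀ ℓ, MemLp (g ℓ) 2 μ := by
    intro ℓ
    induction ℓ with
    | zero => rw [hg0]; exact hf2
    | succ n ih =>
      obtain ⟨-, -, -, h4⟩ := step μ P hstat (hgm n) ih
      exact MemLp.ae_eq (haeq n).symm h4
  set S : ℕ → ℝ := fun ℓ => ∫ y, g ℓ y ^ 2 ∂μ with hS
  set V : ℕ → ℝ := fun ℓ => ∫ x, ((∫ y, g ℓ y ^ 2 ∂P x) - (∫ y, g ℓ y ∂P x) ^ 2) ∂μ with hV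
  have hVeq : ∀ ℓ, V ℓ = S ℓ - S (ℓ + 1) := by
    intro ℓ
    obtain ⟨h1, h2int, h3, h4⟩ := step μ P hstat (hgm ℓ) (hmem ℓ)
    have hsqQ : Integrable (fun x => (∫ y, g ℓ y ∂P x) ^ 2) μ :=
      (memLp_two_iff_integrable_sq h4.aestronglyMeasurable).1 h4
    have hVsub : V ℓ = (∫ x, (∫ y, g ℓ y ^ 2 ∂P x) ∂μ) - ∫ x, (∫ y, g ℓ y ∂P x) ^ 2 ∂μ :=
      integral_sub h2int hsqQ
    rw [hVsub, h3]
    have hlast : ∫ x, (∫ y, g ℓ y ∂P x) ^ 2 ∂μ = S (ℓ + 1) := by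
      refine integral_congr_ae ?_
      filter_upwards [haeq ℓ] with x hx
      rw [hx]
    rw [hlast]
  have hVnn : ∀ ℓ, 0 ≤ V ℓ := by
    intro ℓ
    obtain ⟨h1, -, -, -⟩ := step μ P hstat (hgm ℓ) (hmem ℓ)
    refine integral_nonneg_of_ae ?_
    filter_upwards [h1] with x hx
    have hv := variance_nonneg (g ℓ) (P x)
    rw [variance_eq_sub hx] at hv
    simp only [Pi.pow_apply] at hv
    simp only [Pi.zero_apply]
    linarith
  have hSnn : ∀ ℓ, 0 ≤ S ℓ := fun ℓ => integral_nonneg fun y => sq_nonneg _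
  have hS0 : S 0 = ∫ x, f x ^ 2 ∂μ := by
    show (∫ y, g 0 y ^ 2 ∂μ) = _
    rw [hg0]
  have hsumV : ∑ ℓ ∈ range K, V ℓ ≤ ∫ x, f x ^ 2 ∂μ := by
    have htel : ∑ ℓ ∈ range K, V ℓ = S 0 - S K := by
      rw [Finset.sum_congr rfl fun ℓ _ => hVeq ℓ]
      exact Finset.sum_range_sub' S K
    rw [htel, hS0]
    linarith [hSnn K]
  -- scalar estimates
  have haℓnn : ∀ ℓ, 0 ≤ a ℓ := by
    intro ℓ
    refine Finset.sum_nonneg fun k hk => ?_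
    have hk' : k ∈ Icc 1 K := by simp only [mem_Icc] at hk ⊢; omega
    exact mul_nonneg (hw0 k hk') (pow_nonneg hγ0 k)
  have haγ : ∀ ℓ, a ℓ ≤ γ ^ (ℓ + 1) := by
    intro ℓ
    calc a ℓ ≤ ∑ k ∈ Icc (ℓ + 1) K, w k * γ ^ (ℓ + 1) := by
          refine Finset.sum_le_sum fun k hk => ?_
          have hk1 : ℓ + 1 ≤ k := (mem_Icc.1 hk).1
          have hk' : k ∈ Icc 1 K := by simp only [mem_Icc] at hk ⊢; omega
          exact mul_le_mul_of_nonneg_left (pow_le_pow_of_le_one hγ0 hγ1.le hk1) (hw0 k hk')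
      _ = (∑ k ∈ Icc (ℓ + 1) K, w k) * γ ^ (ℓ + 1) := by rw [Finset.sum_mul]
      _ ≤ 1 * γ ^ (ℓ + 1) := by
          refine mul_le_mul_of_nonneg_right ?_ (pow_nonneg hγ0 _)
          rw [← hw1]
          refine Finset.sum_le_sum_of_subset_of_nonneg ?_ fun k hk _ => hw0 k hk
          intro k hk; simp only [mem_Icc] at hk ⊢; omega
      _ = γ ^ (ℓ + 1) := one_mul _
  have hgeo : ∀ k : ℕ, ∑ ℓ ∈ range k, γ ^ (ℓ + 1) = γ * (1 - γ ^ k) / (1 - γ) := by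
    intro k
    have h1 : ∑ ℓ ∈ range k, γ ^ (ℓ + 1) = γ * ∑ ℓ ∈ range k, γ ^ ℓ := by
      rw [Finset.mul_sum]
      refine Finset.sum_congr rfl fun ℓ _ => by ring
    have h2 : (γ ^ k - 1) / (γ - 1) = (1 - γ ^ k) / (1 - γ) := by
      rw [div_eq_div_iff (sub_ne_zero.mpr hγ1.ne) (sub_ne_zero.mpr hγ1.ne')]
      ring
    rw [h1, geom_sum_eq hγ1.ne k, h2, mul_div_assoc]
  have hγk1 : ∀ k : ℕ, γ ^ k ≤ 1 := fun k => pow_le_one₀ hγ0 hγ1.le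
  have hγbar1 : γbar ≤ 1 := by
    rw [hγbar, ← hw1]
    refine Finset.sum_le_sum fun k hk => ?_
    calc w k * γ ^ k ≤ w k * 1 := mul_le_mul_of_nonneg_left (hγk1 k) (hw0 k hk)
      _ = w k := mul_one _
  have hA : ∑ ℓ ∈ range K, a ℓ ^ 2 ≤ γ * (1 - γbar) / (1 - γ) := by
    calc ∑ ℓ ∈ range K, a ℓ ^ 2 ≤ ∑ ℓ ∈ range K, γ ^ (ℓ + 1) * a ℓ := by
          refine Finset.sum_le_sum fun ℓ _ => ?_
          rw [sq]
          exact mul_le_mul_of_nonneg_right (haγ ℓ) (haℓnn ℓ)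
      _ = ∑ ℓ ∈ range K, ∑ k ∈ Icc (ℓ + 1) K, γ ^ (ℓ + 1) * (w k * γ ^ k) := by
          refine Finset.sum_congr rfl fun ℓ _ => ?_
          rw [ha, Finset.mul_sum]
      _ = ∑ k ∈ Icc 1 K, ∑ ℓ ∈ range k, γ ^ (ℓ + 1) * (w k * γ ^ k) := by
          refine Finset.sum_comm' ?_
          intro x y
          simp only [mem_range, mem_Icc]
          omega
      _ = ∑ k ∈ Icc 1 K, (w k * γ ^ k) * (γ * (1 - γ ^ k) / (1 - γ)) := by
          refine Finset.sum_congr rfl fun k _ => ?_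
          rw [← Finset.sum_mul, hgeo k, mul_comm]
      _ ≤ ∑ k ∈ Icc 1 K, (w k * (1 - γ ^ k)) * (γ / (1 - γ)) := by
          refine Finset.sum_le_sum fun k hk => ?_
          have hwk := hw0 k hk
          have h1 : γ ^ k * (1 - γ ^ k) ≤ 1 - γ ^ k :=
            mul_le_of_le_one_left (by linarith [hγk1 k]) (hγk1 k)
          have hrw1 : (w k * γ ^ k) * (γ * (1 - γ ^ k) / (1 - γ))
              = (γ / (1 - γ)) * (w k * (γ ^ k * (1 - γ ^ k))) := by ring
          have hrw2 : (w k * (1 - γ ^ k)) * (γ / (1 - γ))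
              = (γ / (1 - γ)) * (w k * (1 - γ ^ k)) := by ring
          rw [hrw1, hrw2]
          refine mul_le_mul_of_nonneg_left ?_ (div_nonneg hγ0 honeγ.le)
          exact mul_le_mul_of_nonneg_left h1 hwk
      _ = γ * (1 - γbar) / (1 - γ) := by
          rw [← Finset.sum_mul]
          have hsum : ∑ k ∈ Icc 1 K, w k * (1 - γ ^ k) = 1 - γbar := by
            rw [hγbar]
            rw [show (∑ k ∈ Icc 1 K, w k * (1 - γ ^ k))
                = (∑ k ∈ Icc 1 K, w k) - ∑ k ∈ Icc 1 K, w k * γ ^ k by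
              rw [← Finset.sum_sub_distrib]
              exact Finset.sum_congr rfl fun k _ => by ring]
            rw [hw1]
          rw [hsum]
          ring
  -- assemble
  show ∑ ℓ ∈ range K, a ℓ * Real.sqrt (V ℓ)
      ≤ Real.sqrt (γ * (1 - γbar) / (1 - γ)) * Real.sqrt (∫ x, f x ^ 2 ∂μ)
  have hcs := Finset.sum_mul_sq_le_sq_mul_sq (range K) a (fun ℓ => Real.sqrt (V ℓ))
  have hsq2 : ∑ ℓ ∈ range K, Real.sqrt (V ℓ) ^ 2 = ∑ ℓ ∈ range K, V ℓ :=
    Finset.sum_congr rfl fun ℓ _ => Real.sq_sqrt (hVnn ℓ)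
  have hLnn : 0 ≤ ∑ ℓ ∈ range K, a ℓ * Real.sqrt (V ℓ) :=
    Finset.sum_nonneg fun ℓ _ => mul_nonneg (haℓnn ℓ) (Real.sqrt_nonneg _)
  have hCnn : 0 ≤ γ * (1 - γbar) / (1 - γ) :=
    div_nonneg (mul_nonneg hγ0 (by linarith)) honeγ.le
  have hbound : (∑ ℓ ∈ range K, a ℓ * Real.sqrt (V ℓ)) ^ 2
      ≤ (γ * (1 - γbar) / (1 - γ)) * ∫ x, f x ^ 2 ∂μ := by
    refine le_trans hcs ?_
    rw [hsq2]
    exact mul_le_mul hA hsumV (Finset.sum_nonneg fun ℓ _ => hVnn ℓ) hCnn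
  calc ∑ ℓ ∈ range K, a ℓ * Real.sqrt (V ℓ)
      = Real.sqrt ((∑ ℓ ∈ range K, a ℓ * Real.sqrt (V ℓ)) ^ 2) := (Real.sqrt_sq hLnn).symm
    _ ≤ Real.sqrt ((γ * (1 - γbar) / (1 - γ)) * ∫ x, f x ^ 2 ∂μ) := Real.sqrt_le_sqrt hbound
    _ = Real.sqrt (γ * (1 - γbar) / (1 - γ)) * Real.sqrt (∫ x, f x ^ 2 ∂μ) :=
        Real.sqrt_mul hCnn _
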